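/- Let μ > 0, x_r ≥ 0, k_r > 0, and 0 < ω₁ ≤ ω₂ be real numbers. Define τ_G(ω) = √(x_r²/(2μω)), τ_H(ω) = arctan(ω/k_r)/ω, and τ_M = τ_G + τ_H on (0, ∞). Then the delay distortion of the combined MC channel decomposes additively: (sup of τ_M over [ω₁, ω₂]) − (inf of τ_M over [ω₁, ω₂]) = [τ_G(ω₁) − τ_G(ω₂)] + [τ_H(ω₁) − τ_H(ω₂)], i.e., R_M = R_G + R_H. -/

import Mathlib

lemma arctan_mul_le_aux (t : ℝ) (ht0 : 0 ≤ t) (ht1 : t ≤ 1) (x : ℝ) (hx : 0 ≤ x) :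
    t * Real.arctan x ≤ Real.arctan (t * x) := by
  set g : ℝ → ℝ := fun y => Real.arctan (t * y) - t * Real.arctan y with hg
  have hderiv : ∀ y : ℝ,
      HasDerivAt g (t * (1 / (1 + (t * y) ^ 2)) - t * (1 / (1 + y ^ 2))) y := by
    intro y
    have h1 : HasDerivAt (fun y => Real.arctan (t * y)) (1 / (1 + (t * y) ^ 2) * t) y :=
      (Real.hasDerivAt_arctan (t * y)).comp y (by simpa using (hasDerivAt_id y).const_mul t)
    have h2 : HasDerivAt (fun y => t * Real.arctan y) (t * (1 / (1 + y ^ 2))) y :=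
      (Real.hasDerivAt_arctan y).const_mul t
    have := h1.sub h2
    rw [hg]; exact this.congr_deriv (by ring)
  have hmono : MonotoneOn g (Set.Ici 0) := by
    apply monotoneOn_of_deriv_nonneg (convex_Ici 0)
      (fun y _ => (hderiv y).continuousAt.continuousWithinAt)
      (fun y _ => (hderiv y).differentiableAt.differentiableWithinAt)
    · intro y hy
      rw [(hderiv y).deriv]
      have hle : (t * y) ^ 2 ≤ y ^ 2 := by
        have : t ^ 2 ≤ 1 := by nlinarith
        nlinarith [sq_nonneg y]
      have h1 : (0:ℝ) < 1 + (t * y) ^ 2 := by positivity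
      have h2 : (0:ℝ) < 1 + y ^ 2 := by positivity
      have : 1 / (1 + y ^ 2) ≤ 1 / (1 + (t * y) ^ 2) :=
        one_div_le_one_div_of_le h1 (by linarith)
      nlinarith
  have h0 : g 0 ≤ g x := hmono Set.self_mem_Ici hx hx
  simp [hg, Real.arctan_zero] at h0
  linarith

theorem mc_delay_distortion_additive (μ x_r k_r : ℝ)
    (hμ : 0 < μ) (hx : 0 ≤ x_r) (hkr : 0 < k_r)
    (ω₁ ω₂ : ℝ) (hω₁ : 0 < ω₁) (h12 : ω₁ ≤ ω₂)
    (τ_G τ_H τ_M : ℝ → ℝ)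
    (hG : ∀ ω > (0 : ℝ), τ_G ω = Real.sqrt (x_r ^ 2 / (2 * μ * ω)))
    (hH : ∀ ω > (0 : ℝ), τ_H ω = Real.arctan (ω / k_r) / ω)
    (hM : ∀ ω > (0 : ℝ), τ_M ω = τ_G ω + τ_H ω) :
    sSup (τ_M '' Set.Icc ω₁ ω₂) - sInf (τ_M '' Set.Icc ω₁ ω₂) =
      (τ_G ω₁ - τ_G ω₂) + (τ_H ω₁ - τ_H ω₂) := by
  -- τ_M is antitone on positive reals
  have hanti : ∀ a b : ℝ, 0 < a → a ≤ b → τ_M b ≤ τ_M a := by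
    intro a b ha hab
    have hb : 0 < b := lt_of_lt_of_le ha hab
    have hGanti : τ_G b ≤ τ_G a := by
      rw [hG a ha, hG b hb]
      apply Real.sqrt_le_sqrt
      gcongr
    have hHanti : τ_H b ≤ τ_H a := by
      rw [hH a ha, hH b hb]
      rw [div_le_div_iff₀ hb ha]
      have key : (a / b) * Real.arctan (b / k_r) ≤ Real.arctan ((a / b) * (b / k_r)) :=
        arctan_mul_le_aux (a / b) (by positivity) ((div_le_one hb).mpr hab) (b / k_r)
          (by positivity)
      have heq : (a / b) * (b / k_r) = a / k_r := by field_simp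
      rw [heq] at key
      have := mul_le_mul_of_nonneg_left key hb.le
      calc Real.arctan (b / k_r) * a = b * ((a / b) * Real.arctan (b / k_r)) := by
            field_simp
        _ ≤ b * Real.arctan (a / k_r) := this
        _ = Real.arctan (a / k_r) * b := by ring
    rw [hM a ha, hM b hb]
    linarith
  have hω₂ : 0 < ω₂ := lt_of_lt_of_le hω₁ h12
  have hgreat : IsGreatest (τ_M '' Set.Icc ω₁ ω₂) (τ_M ω₁) := by
    constructor
    · exact ⟨ω₁, Set.left_mem_Icc.mpr h12, rfl⟩
    · rintro y ⟨x, hxm, rfl⟩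
      exact hanti ω₁ x hω₁ hxm.1
  have hleast : IsLeast (τ_M '' Set.Icc ω₁ ω₂) (τ_M ω₂) := by
    constructor
    · exact ⟨ω₂, Set.right_mem_Icc.mpr h12, rfl⟩
    · rintro y ⟨x, hxm, rfl⟩
      exact hanti x ω₂ (lt_of_lt_of_le hω₁ hxm.1) hxm.2
  rw [hgreat.csSup_eq, hleast.csInf_eq, hM ω₁ hω₁, hM ω₂ hω₂]
  ring
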